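/- Let a1 > 1, a2 > 1 and let θ_1, …, θ_k be distributed according to the multiplicative inverse gamma prior with parameters (a1, a2). Then E(θ_h) = 1 / ((a1 − 1) · (a2 − 1)^{h−1}) for every h ∈ {1, …, k}. Consequently, if in addition 1 < a2 < 2, both the sequence E(θ_h) and the sequence a1 · a2^{h−1} (the expectation of the corresponding multiplicative gamma variables τ_h = 1/θ_h) are strictly increasing in h. -/

import Mathlib

open MeasureTheory ProbabilityTheory Real Filter Set
open scoped NNReal ENNReal

/-- Density of the inverse gamma distribution `Inv-Ga(a, b)`: equal to
`b^a / Γ(a) · x^{-(a+1)} · e^{-b/x}` for `x > 0` and `0` otherwise. -/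
noncomputable def invGammaPDF (a b : ℝ) (x : ℝ) : ℝ :=
  if 0 < x then b ^ a / Real.Gamma a * x ^ (-(a + 1)) * Real.exp (-b / x) else 0

/-- The inverse gamma distribution `Inv-Ga(a, b)` as a measure on `ℝ`. -/
noncomputable def invGammaMeasure (a b : ℝ) : Measure ℝ :=
  MeasureTheory.volume.withDensity (fun x => ENNReal.ofReal (invGammaPDF a b x))

lemma invGammaPDF_nonneg {a b : ℝ} (ha : 0 < a) (hb : 0 ≤ b) (x : ℝ) :
    0 ≤ invGammaPDF a b x := by
  unfold invGammaPDF
  split_ifs with h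
  · have hG := Real.Gamma_pos_of_pos ha
    exact mul_nonneg (mul_nonneg (div_nonneg (Real.rpow_nonneg hb a) hG.le)
      (Real.rpow_nonneg h.le _)) (Real.exp_nonneg _)
  · exact le_rfl

lemma invGammaPDF_measurable (a b : ℝ) : Measurable (invGammaPDF a b) := by
  unfold invGammaPDF
  apply Measurable.ite measurableSet_Ioi
  · fun_prop
  · fun_prop

lemma invGamma_moment {a : ℝ} (ha : 1 < a) :
    Integrable (fun x : ℝ => x * invGammaPDF a 1 x) volume ∧
      ∫ x, x * invGammaPDF a 1 x = 1 / (a - 1) := by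
  have ha1 : (0:ℝ) < a - 1 := by linarith
  have hG : (0:ℝ) < Real.Gamma (a - 1) := Real.Gamma_pos_of_pos ha1
  have hGa : Real.Gamma a = (a - 1) * Real.Gamma (a - 1) := by
    have h := Real.Gamma_add_one (ne_of_gt ha1)
    rw [show a - 1 + 1 = a by ring] at h
    exact h
  have hGne : Real.Gamma a ≠ 0 := by rw [hGa]; positivity
  set F : ℝ → ℝ := fun y => Real.exp (-y) * y ^ (a - 1 - 1) with hF
  have hFint : IntegrableOn F (Ioi 0) := Real.GammaIntegral_convergent ha1
  have hFval : ∫ y in Ioi 0, F y = Real.Gamma (a - 1) :=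
    (Real.Gamma_eq_integral ha1).symm
  have hne : ((-1 : ℝ)) ≠ 0 := by norm_num
  have hpt : ∀ x ∈ Ioi (0:ℝ),
      (|(-1:ℝ)| * x ^ ((-1:ℝ) - 1)) • F (x ^ (-1:ℝ)) =
        Real.Gamma a * (x * invGammaPDF a 1 x) := by
    intro x hx
    have hx0 : (0:ℝ) < x := hx
    have e1 : x * x ^ (-(a+1)) = x ^ (-a) := by
      nth_rewrite 1 [← Real.rpow_one x]
      rw [← Real.rpow_add hx0]; congr 1; ring
    have e2 : x ^ ((-1:ℝ)-1) * (x ^ (-1:ℝ)) ^ (a-1-1) = x ^ (-a) := by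
      rw [← Real.rpow_mul hx0.le, ← Real.rpow_add hx0]; congr 1; ring
    simp only [hF, invGammaPDF, if_pos hx0, smul_eq_mul, Real.one_rpow, abs_neg, abs_one, one_mul]
    have e3 : (-1:ℝ)/x = -(x ^ (-1:ℝ)) := by rw [Real.rpow_neg_one, neg_div, one_div]
    rw [e3]
    calc x ^ ((-1:ℝ)-1) * (Real.exp (-(x ^ (-1:ℝ))) * (x ^ (-1:ℝ)) ^ (a-1-1))
        = (x ^ ((-1:ℝ)-1) * (x ^ (-1:ℝ)) ^ (a-1-1)) * Real.exp (-(x ^ (-1:ℝ))) := by ring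
      _ = x ^ (-a) * Real.exp (-(x ^ (-1:ℝ))) := by rw [e2]
      _ = (Real.Gamma a * (1/Real.Gamma a)) * ((x * x ^ (-(a+1))) * Real.exp (-(x ^ (-1:ℝ)))) := by
            rw [mul_one_div_cancel hGne, one_mul, e1]
      _ = Real.Gamma a * (x * (1/Real.Gamma a * x ^ (-(a+1)) * Real.exp (-(x ^ (-1:ℝ))))) := by
            ring
  have hGint : IntegrableOn (fun x => (|(-1:ℝ)| * x ^ ((-1:ℝ)-1)) • F (x ^ (-1:ℝ))) (Ioi 0) :=
    (integrableOn_Ioi_comp_rpow_iff F hne).mpr hFint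
  have hGval : ∫ x in Ioi 0, (|(-1:ℝ)| * x ^ ((-1:ℝ)-1)) • F (x ^ (-1:ℝ)) = Real.Gamma (a-1) := by
    rw [integral_comp_rpow_Ioi F hne, hFval]
  set f : ℝ → ℝ := fun x => x * invGammaPDF a 1 x with hf
  have hind : f = (Ioi (0:ℝ)).indicator f := by
    funext x
    by_cases hx : x ∈ Ioi (0:ℝ)
    · rw [indicator_of_mem hx]
    · rw [indicator_of_notMem hx]
      simp only [hf, invGammaPDF, if_neg (not_lt.mpr (by simpa using hx)), mul_zero]
  have heq : EqOn (fun x => (Real.Gamma a)⁻¹ *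
      ((|(-1:ℝ)| * x ^ ((-1:ℝ)-1)) • F (x ^ (-1:ℝ)))) f (Ioi 0) := by
    intro x hx
    simp only
    rw [hpt x hx, inv_mul_cancel_left₀ hGne]
  have hfint_on : IntegrableOn f (Ioi 0) :=
    MeasureTheory.IntegrableOn.congr_fun (hGint.const_mul ((Real.Gamma a)⁻¹)) heq
      measurableSet_Ioi
  have hfint : Integrable f volume := by
    have h2 := (integrable_indicator_iff measurableSet_Ioi).2 hfint_on
    rwa [← hind] at h2
  refine ⟨hfint, ?_⟩
  have h1 : ∫ x, f x = ∫ x in Ioi 0, f x := by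
    rw [← integral_indicator measurableSet_Ioi, ← hind]
  rw [show (fun x : ℝ => x * invGammaPDF a 1 x) = f from rfl] at *
  rw [h1, ← setIntegral_congr_fun measurableSet_Ioi heq, MeasureTheory.integral_const_mul, hGval, hGa]
  field_simp

lemma invGamma_integrable_id {a : ℝ} (ha : 1 < a) :
    Integrable id (invGammaMeasure a 1) ∧
      ∫ x, x ∂(invGammaMeasure a 1) = 1 / (a - 1) := by
  obtain ⟨hint, hval⟩ := invGamma_moment ha
  have ha0 : (0:ℝ) < a := by linarith
  have hmeasnn : Measurable (fun x => (invGammaPDF a 1 x).toNNReal) :=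
    (invGammaPDF_measurable a 1).real_toNNReal
  have hdens : invGammaMeasure a 1 =
      MeasureTheory.volume.withDensity (fun x => ((invGammaPDF a 1 x).toNNReal : ℝ≥0∞)) := rfl
  have hsmul : (fun x : ℝ => (invGammaPDF a 1 x).toNNReal • x) =
      (fun x : ℝ => x * invGammaPDF a 1 x) := by
    funext x
    rw [NNReal.smul_def]
    simp [Real.coe_toNNReal _ (invGammaPDF_nonneg ha0 zero_le_one x), mul_comm]
  constructor
  · rw [hdens, integrable_withDensity_iff_integrable_smul hmeasnn]
    rw [show (fun x : ℝ => (invGammaPDF a 1 x).toNNReal • id x) =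
      (fun x : ℝ => x * invGammaPDF a 1 x) from hsmul]
    exact hint
  · rw [hdens, integral_withDensity_eq_integral_smul hmeasnn (fun x => x), hsmul]
    exact hval

/-- expectations of the multiplicative inverse gamma prior:
`E(θ_h) = 1/((a1-1)(a2-1)^{h-1})` for `a1, a2 > 1`; moreover if `1 < a2 < 2` then both
`E(θ_h)` and `a1 · a2^{h-1}` strictly increase in `h`. -/
theorem multiplicative_inverse_gamma_expectation
    {Ω : Type*} [MeasureSpace Ω] [IsProbabilityMeasure (ℙ : Measure Ω)]
    (a1 a2 : ℝ) (ha1 : 1 < a1) (ha2 : 1 < a2)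
    (k : ℕ) (ϑ : ℕ → Ω → ℝ)
    (hmeas : ∀ l, Measurable (ϑ l))
    (hindep : iIndepFun (m := fun _ => Real.measurableSpace) ϑ ℙ)
    (hlaw1 : Measure.map (ϑ 0) ℙ = invGammaMeasure a1 1)
    (hlaw2 : ∀ l, 1 ≤ l → Measure.map (ϑ l) ℙ = invGammaMeasure a2 1) :
    (∀ h, 1 ≤ h → h ≤ k →
      ∫ ω, ∏ l ∈ Finset.range h, ϑ l ω ∂ℙ = 1 / ((a1 - 1) * (a2 - 1) ^ (h - 1))) ∧
    (a2 < 2 → ∀ h, 1 ≤ h → h ≤ k - 1 →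
      (∫ ω, ∏ l ∈ Finset.range h, ϑ l ω ∂ℙ) <
        (∫ ω, ∏ l ∈ Finset.range (h + 1), ϑ l ω ∂ℙ) ∧
      a1 * a2 ^ (h - 1) < a1 * a2 ^ h) := by
  set m : ℕ → ℝ := fun l => if l = 0 then 1 / (a1 - 1) else 1 / (a2 - 1) with hm
  have key : ∀ l, Integrable (ϑ l) ℙ ∧ ∫ ω, ϑ l ω ∂ℙ = m l := by
    intro l
    have : ∃ a : ℝ, 1 < a ∧ Measure.map (ϑ l) ℙ = invGammaMeasure a 1 ∧ m l = 1 / (a - 1) := by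
      rcases Nat.eq_zero_or_pos l with hl | hl
      · exact ⟨a1, ha1, hl ▸ hlaw1, by simp [hm, hl]⟩
      · exact ⟨a2, ha2, hlaw2 l hl, by simp [hm, Nat.pos_iff_ne_zero.mp hl]⟩
    obtain ⟨a, ha, hmap, hml⟩ := this
    obtain ⟨hint, hval⟩ := invGamma_integrable_id ha
    rw [← hmap] at hint hval
    constructor
    · have := (integrable_map_measure aestronglyMeasurable_id
        (hmeas l).aemeasurable).mp hint
      simpa [Function.comp] using this
    · rw [hml, ← hval]
      exact (integral_map (hmeas l).aemeasurable
        (f := fun x : ℝ => x) aestronglyMeasurable_id).symm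
  have prodkey : ∀ n, Integrable (fun ω => ∏ l ∈ Finset.range n, ϑ l ω) ℙ ∧
      ∫ ω, ∏ l ∈ Finset.range n, ϑ l ω ∂ℙ = ∏ l ∈ Finset.range n, m l := by
    intro n
    induction n with
    | zero => simp
    | succ n IH =>
      have hfun : (∏ j ∈ Finset.range n, ϑ j) = fun ω => ∏ l ∈ Finset.range n, ϑ l ω := by
        funext ω; simp
      have hI : IndepFun (∏ j ∈ Finset.range n, ϑ j) (ϑ n) ℙ :=
        hindep.indepFun_prod_range_succ hmeas n
      rw [hfun] at hI
      have hint := hI.integrable_mul IH.1 (key n).1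
      have hval := IndepFun.integral_mul_eq_mul_integral hI IH.1.aestronglyMeasurable (key n).1.aestronglyMeasurable
      have hmul : ((fun ω => ∏ l ∈ Finset.range n, ϑ l ω) * ϑ n) =
          fun ω => ∏ l ∈ Finset.range (n + 1), ϑ l ω := by
        funext ω; simp [Finset.prod_range_succ]
      rw [hmul] at hint hval
      refine ⟨hint, ?_⟩
      rw [hval, IH.2, (key n).2, Finset.prod_range_succ]
  have hc1 : (0:ℝ) < a1 - 1 := by linarith
  have hc2 : (0:ℝ) < a2 - 1 := by linarith
  have formula : ∀ h : ℕ, 1 ≤ h →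
      ∫ ω, ∏ l ∈ Finset.range h, ϑ l ω ∂ℙ = 1 / ((a1 - 1) * (a2 - 1) ^ (h - 1)) := by
    intro h hh
    obtain ⟨n, rfl⟩ : ∃ n, h = n + 1 := ⟨h - 1, by omega⟩
    rw [(prodkey (n + 1)).2, Finset.prod_range_succ']
    have : ∀ i, m (i + 1) = 1 / (a2 - 1) := fun i => by simp [hm]
    rw [Finset.prod_congr rfl fun i _ => this i, Finset.prod_const, Finset.card_range]
    simp only [hm, if_pos rfl, Nat.add_sub_cancel]
    rw [div_pow, one_pow]
    field_simp
  refine ⟨fun h hh _ => formula h hh, ?_⟩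
  intro ha2' h hh1 hhk
  constructor
  · rw [formula h hh1, formula (h + 1) (by omega)]
    obtain ⟨n, rfl⟩ : ∃ n, h = n + 1 := ⟨h - 1, by omega⟩
    simp only [Nat.add_sub_cancel]
    apply one_div_lt_one_div_of_lt
    · positivity
    · have hlt : (a2 - 1) ^ (n + 1) < (a2 - 1) ^ n := by
        rw [pow_succ]
        exact mul_lt_of_lt_one_right (pow_pos hc2 n) (by linarith)
      exact (mul_lt_mul_iff_right₀ hc1).mpr hlt
  · obtain ⟨n, rfl⟩ : ∃ n, h = n + 1 := ⟨h - 1, by omega⟩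
    simp only [Nat.add_sub_cancel]
    have : a2 ^ n < a2 ^ (n + 1) := by
      rw [pow_succ]
      exact lt_mul_of_one_lt_right (pow_pos (by linarith) n) ha2
    exact (mul_lt_mul_iff_right₀ (by linarith : (0:ℝ) < a1)).mpr this
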